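/- arXiv:1502.03422 — 5 statements merged into one kernel-verified Lean document; each statement's English description precedes it below -/
import Mathlib

section
/- Let Φ be a Young's function satisfying the ∇' condition globally, i.e., there exists b > 0 such that Φ(bxy) ≥ Φ(x)Φ(y) for all x, y ≥ 0. Then its complementary function Φ* satisfies the Δ' condition (up to a constant): there exists c > 0 with Φ*(xy) ≤ c·Φ*(x)·Φ*(y) for x,y in the relevant range. -/
/-- A Young's function: continuous, convex, even, vanishing only at `0`,
with `Φ x / x → ∞` as `x → ∞`. -/
def IsYoung (Φ : ℝ → ℝ) : Prop :=
  Continuous Φ ∧ ConvexOn ℝ Set.univ Φ ∧ (∀ x, Φ x = 0 ↔ x = 0) ∧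
    (∀ x, Φ (-x) = Φ x) ∧ Filter.Tendsto (fun x => Φ x / x) Filter.atTop Filter.atTop

/-- The complementary Young's function `Φ*(y) = sup { x·|y| − Φ(x) : x ≥ 0 }`. -/
noncomputable def complYoung (Φ : ℝ → ℝ) (y : ℝ) : ℝ :=
  sSup ((fun x => x * |y| - Φ x) '' Set.Ici (0 : ℝ))

namespace YoungAux

variable {Φ : ℝ → ℝ}

lemma phi_zero (hΦ : IsYoung Φ) : Φ 0 = 0 := (hΦ.2.2.1 0).mpr rfl

lemma phi_nonneg (hΦ : IsYoung Φ) (x : ℝ) : 0 ≤ Φ x := by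
  have h := hΦ.2.1.2 (Set.mem_univ x) (Set.mem_univ (-x))
    (by norm_num : (0:ℝ) ≤ 1/2) (by norm_num : (0:ℝ) ≤ 1/2) (by norm_num)
  simp only [smul_eq_mul] at h
  have he : (1/2:ℝ) * x + 1/2 * (-x) = 0 := by ring
  rw [he, phi_zero hΦ, hΦ.2.2.2.1] at h
  linarith

lemma bdd (hΦ : IsYoung Φ) (y : ℝ) :
    BddAbove ((fun x => x * |y| - Φ x) '' Set.Ici (0:ℝ)) := by
  obtain ⟨M, hM⟩ := Filter.eventually_atTop.mp (hΦ.2.2.2.2.eventually_ge_atTop |y|)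
  refine ⟨max M 1 * |y|, ?_⟩
  rintro z ⟨x, hx, rfl⟩
  simp only
  by_cases hxM : x ≤ max M 1
  · have h1 : x * |y| ≤ max M 1 * |y| :=
      mul_le_mul_of_nonneg_right hxM (abs_nonneg y)
    have h2 := phi_nonneg hΦ x
    linarith
  · push_neg at hxM
    have hx1 : (1:ℝ) < x := lt_of_le_of_lt (le_max_right M 1) hxM
    have hyx : |y| ≤ Φ x / x := hM x (le_of_lt (lt_of_le_of_lt (le_max_left M 1) hxM))
    have hx0 : (0:ℝ) < x := lt_trans one_pos hx1
    have h3 : x * |y| ≤ Φ x := by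
      rw [le_div_iff₀ hx0] at hyx
      linarith
    have h4 : (0:ℝ) ≤ max M 1 * |y| := by positivity
    linarith

lemma le_compl (hΦ : IsYoung Φ) {x : ℝ} (y : ℝ) (hx : 0 ≤ x) :
    x * |y| - Φ x ≤ complYoung Φ y :=
  le_csSup (bdd hΦ y) ⟨x, hx, rfl⟩

lemma compl_nonneg (hΦ : IsYoung Φ) (y : ℝ) : 0 ≤ complYoung Φ y := by
  have := le_compl hΦ y (le_refl 0)
  rw [phi_zero hΦ] at this
  linarith [this]

lemma compl_zero_le (hΦ : IsYoung Φ) : complYoung Φ 0 ≤ 0 := by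
  have hne : ((fun x => x * |(0:ℝ)| - Φ x) '' Set.Ici (0:ℝ)).Nonempty :=
    ⟨_, ⟨0, Set.self_mem_Ici, rfl⟩⟩
  apply csSup_le hne
  rintro z ⟨x, hx, rfl⟩
  simp only [abs_zero, mul_zero, zero_sub, neg_nonpos]
  exact phi_nonneg hΦ x

lemma compl_pos (hΦ : IsYoung Φ) {b : ℝ} (hb : 0 < b)
    (hN : ∀ x y : ℝ, 0 ≤ x → 0 ≤ y → Φ x * Φ y ≤ Φ (b * x * y))
    {u : ℝ} (hu : 0 < u) : 0 < complYoung Φ u := by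
  by_contra h
  push_neg at h
  have key : ∀ x : ℝ, 0 ≤ x → u * x ≤ Φ x := by
    intro x hx
    have h1 := le_compl hΦ u hx
    rw [abs_of_pos hu] at h1
    nlinarith
  have hΦ1 : 0 < Φ 1 := lt_of_lt_of_le (by linarith : (0:ℝ) < u * 1) (key 1 zero_le_one)
  have bound : ∀ y : ℝ, 1 ≤ y → Φ y / y ≤ b * Φ 1 / u := by
    intro y hy
    have hy0 : (0:ℝ) < y := lt_of_lt_of_le one_pos hy
    set x := 1 / (b * y) with hxdef
    have hx0 : (0:ℝ) < x := by positivity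
    have hbxy : b * x * y = 1 := by
      rw [hxdef]; field_simp
    have h1 := hN x y hx0.le hy0.le
    rw [hbxy] at h1
    have h2 : u * x ≤ Φ x := key x hx0.le
    have h3 : 0 ≤ Φ y := phi_nonneg hΦ y
    have h4 : u * x * Φ y ≤ Φ 1 := le_trans (mul_le_mul_of_nonneg_right h2 h3) h1
    rw [hxdef] at h4
    rw [div_le_div_iff₀ hy0 hu]
    have hby : (0:ℝ) < b * y := by positivity
    have h5 : u * (1 / (b * y)) * Φ y = u * Φ y / (b * y) := by ring
    rw [h5, div_le_iff₀ hby] at h4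
    nlinarith
  obtain ⟨y, hy1, hy2⟩ :=
    ((hΦ.2.2.2.2.eventually_gt_atTop (b * Φ 1 / u)).and (Filter.eventually_ge_atTop 1)).exists
  exact absurd (bound y hy2) (not_le_of_gt hy1)

lemma key_ineq (hΦ : IsYoung Φ) {b : ℝ} (hb : 0 < b)
    (hN : ∀ x y : ℝ, 0 ≤ x → 0 ≤ y → Φ x * Φ y ≤ Φ (b * x * y))
    {u v : ℝ} (hu : 0 < u) (hv : 0 < v) :
    complYoung Φ (u * v) ≤ complYoung Φ (4 * b ^ 2) * complYoung Φ u * complYoung Φ v := by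
  set A := complYoung Φ u with hAdef
  set B := complYoung Φ v with hBdef
  have hA : 0 < A := compl_pos hΦ hb hN hu
  have hB : 0 < B := compl_pos hΦ hb hN hv
  have hne : ((fun x => x * |u * v| - Φ x) '' Set.Ici (0:ℝ)).Nonempty :=
    ⟨_, ⟨0, Set.self_mem_Ici, rfl⟩⟩
  apply csSup_le hne
  rintro z ⟨t, ht, rfl⟩
  simp only
  rw [abs_of_pos (mul_pos hu hv)]
  set s1 := 2 * A / u with hs1def
  set s2 := 2 * B / v with hs2def
  set w := t * u * v / (4 * b ^ 2 * A * B) with hwdef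
  have hs1 : 0 < s1 := by positivity
  have hs2 : 0 < s2 := by positivity
  have ht' : (0:ℝ) ≤ t := ht
  have hw : 0 ≤ w := by
    rw [hwdef]
    exact div_nonneg (by positivity) (by positivity)
  have hΦs1 : A ≤ Φ s1 := by
    have h1 := le_compl hΦ u hs1.le
    rw [abs_of_pos hu] at h1
    have h2 : s1 * u = 2 * A := by rw [hs1def]; field_simp
    nlinarith
  have hΦs2 : B ≤ Φ s2 := by
    have h1 := le_compl hΦ v hs2.le
    rw [abs_of_pos hv] at h1
    have h2 : s2 * v = 2 * B := by rw [hs2def]; field_simp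
    nlinarith
  have h1 : Φ s1 * Φ s2 ≤ Φ (b * s1 * s2) := hN s1 s2 hs1.le hs2.le
  have h2 : Φ (b * s1 * s2) * Φ w ≤ Φ (b * (b * s1 * s2) * w) :=
    hN (b * s1 * s2) w (by positivity) hw
  have heq : b * (b * s1 * s2) * w = t := by
    rw [hs1def, hs2def, hwdef]
    field_simp
    ring
  have hΦw : 0 ≤ Φ w := phi_nonneg hΦ w
  have hchain : A * B * Φ w ≤ Φ t := by
    have c1 : A * B * Φ w ≤ Φ s1 * Φ s2 * Φ w := by
      have : A * B ≤ Φ s1 * Φ s2 := by nlinarith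
      exact mul_le_mul_of_nonneg_right this hΦw
    have c2 : Φ s1 * Φ s2 * Φ w ≤ Φ (b * s1 * s2) * Φ w :=
      mul_le_mul_of_nonneg_right h1 hΦw
    calc A * B * Φ w ≤ Φ s1 * Φ s2 * Φ w := c1
      _ ≤ Φ (b * s1 * s2) * Φ w := c2
      _ ≤ Φ (b * (b * s1 * s2) * w) := h2
      _ = Φ t := by rw [heq]
  have htuv : t * (u * v) = 4 * b ^ 2 * A * B * w := by
    rw [hwdef]; field_simp
  have hfin : 4 * b ^ 2 * w - Φ w ≤ complYoung Φ (4 * b ^ 2) := by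
    have h3 := le_compl hΦ (4 * b ^ 2) hw
    rwa [abs_of_pos (by positivity : (0:ℝ) < 4 * b ^ 2), mul_comm w] at h3
  have hAB : 0 < A * B := mul_pos hA hB
  nlinarith [mul_le_mul_of_nonneg_left hfin hAB.le]

end YoungAux

/-- If a Young's function `Φ` satisfies the `∇'` condition globally
(`Φ(bxy) ≥ Φ(x)Φ(y)` for all `x, y ≥ 0` and some `b > 0`), then its
complementary function `Φ*` satisfies the `Δ'` condition:
`Φ*(xy) ≤ c Φ*(x) Φ*(y)` for `x, y ≥ 0`. -/
theorem young_nablaPrime_implies_compl_deltaPrime (Φ : ℝ → ℝ) (hΦ : IsYoung Φ)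
    (hNabla : ∃ b : ℝ, 0 < b ∧ ∀ x y : ℝ, 0 ≤ x → 0 ≤ y → Φ x * Φ y ≤ Φ (b * x * y)) :
    ∃ c : ℝ, 0 < c ∧ ∀ x y : ℝ, 0 ≤ x → 0 ≤ y →
      complYoung Φ (x * y) ≤ c * complYoung Φ x * complYoung Φ y := by
  obtain ⟨b, hb, hN⟩ := hNabla
  refine ⟨complYoung Φ (4 * b ^ 2), YoungAux.compl_pos hΦ hb hN (by positivity), ?_⟩
  intro x y hx hy
  rcases eq_or_lt_of_le hx with hx0 | hx0
  · have : x * y = 0 := by rw [← hx0]; ring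
    rw [this]
    have h1 := YoungAux.compl_zero_le hΦ
    have h2 := YoungAux.compl_nonneg hΦ x
    have h3 := YoungAux.compl_nonneg hΦ y
    have h4 := (YoungAux.compl_nonneg hΦ (4 * b ^ 2))
    nlinarith [mul_nonneg (mul_nonneg h4 h2) h3]
  rcases eq_or_lt_of_le hy with hy0 | hy0
  · have : x * y = 0 := by rw [← hy0]; ring
    rw [this]
    have h1 := YoungAux.compl_zero_le hΦ
    have h2 := YoungAux.compl_nonneg hΦ x
    have h3 := YoungAux.compl_nonneg hΦ y
    have h4 := (YoungAux.compl_nonneg hΦ (4 * b ^ 2))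
    nlinarith [mul_nonneg (mul_nonneg h4 h2) h3]
  exact YoungAux.key_ineq hΦ hb hN hx0 hy0
end

section
/- Let (Ω, Σ, μ) be a measure space with μ(Ω) < ∞, and let Φ ⪯ Ψ be Young's functions (i.e., Φ(x) ≤ Ψ(ax) for all x ≥ x₀ ≥ 0 for some a > 0). If the weighted conditional operator R_u(f) = E(uf) is bounded from L^Φ(Σ) to L^Ψ(Σ), then E(u) ∈ L^∞(𝒜). -/
open MeasureTheory

/-- Membership in the Orlicz space `L^Φ`: `∫ Φ(k |f|) dμ < ∞` for some `k > 0`. -/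
def MemOrlicz {Ω : Type*} {mΩ : MeasurableSpace Ω} (Φ : ℝ → ℝ) (μ : Measure Ω)
    (f : Ω → ℝ) : Prop :=
  ∃ k : ℝ, 0 < k ∧ Integrable (fun x => Φ (k * |f x|)) μ

/-- The Luxemburg norm `N_Φ(f) = inf { k > 0 : ∫ Φ(|f|/k) dμ ≤ 1 }`. -/
noncomputable def luxNorm {Ω : Type*} {mΩ : MeasurableSpace Ω} (Φ : ℝ → ℝ)
    (μ : Measure Ω) (f : Ω → ℝ) : ℝ :=
  sInf {k : ℝ | 0 < k ∧ ∫ x, Φ (|f x| / k) ∂μ ≤ 1}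

lemma IsYoung.zero {Φ : ℝ → ℝ} (h : IsYoung Φ) : Φ 0 = 0 := (h.2.2.1 0).2 rfl

lemma IsYoung.nonneg {Φ : ℝ → ℝ} (h : IsYoung Φ) (x : ℝ) : 0 ≤ Φ x := by
  have key := h.2.1.2 (Set.mem_univ x) (Set.mem_univ (-x))
    (by norm_num : (0:ℝ) ≤ 1/2) (by norm_num : (0:ℝ) ≤ 1/2) (by norm_num)
  simp only [smul_eq_mul] at key
  have hxx : (1/2 : ℝ) * x + (1/2 : ℝ) * (-x) = 0 := by ring
  rw [hxx, h.zero, h.2.2.2.1] at key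
  linarith

lemma IsYoung.strictMonoOn {Φ : ℝ → ℝ} (h : IsYoung Φ) :
    StrictMonoOn Φ (Set.Ici 0) := by
  intro x hx y hy hxy
  have hx0 : (0:ℝ) ≤ x := hx
  have hy0 : 0 < y := lt_of_le_of_lt hx0 hxy
  have hΦy : 0 < Φ y := by
    rcases lt_or_eq_of_le (h.nonneg y) with h' | h'
    · exact h'
    · exact absurd ((h.2.2.1 y).1 h'.symm) hy0.ne'
  have hxy1 : x / y < 1 := (div_lt_one hy0).2 hxy
  have key := h.2.1.2 (Set.mem_univ y) (Set.mem_univ 0)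
    (div_nonneg hx0 hy0.le) (by linarith : (0:ℝ) ≤ 1 - x / y) (by ring)
  simp only [smul_eq_mul] at key
  have hval : (x / y : ℝ) * y + (1 - x / y) * (0:ℝ) = x := by
    field_simp
    ring
  rw [hval, h.zero] at key
  have hk : Φ x ≤ (x / y) * Φ y := by linarith
  calc Φ x ≤ (x / y) * Φ y := hk
    _ < 1 * Φ y := mul_lt_mul_of_pos_right hxy1 hΦy
    _ = Φ y := one_mul _

lemma IsYoung.tendsto_atTop {Φ : ℝ → ℝ} (h : IsYoung Φ) :
    Filter.Tendsto Φ Filter.atTop Filter.atTop := by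
  apply Filter.tendsto_atTop_mono' Filter.atTop _ Filter.tendsto_id
  filter_upwards [h.2.2.2.2.eventually_ge_atTop 1, Filter.eventually_ge_atTop (1:ℝ)] with x h1 h2
  have hx : (0:ℝ) < x := lt_of_lt_of_le one_pos h2
  have hle : x * 1 ≤ x * (Φ x / x) := mul_le_mul_of_nonneg_left h1 hx.le
  calc (id x : ℝ) = x * 1 := (mul_one x).symm
    _ ≤ x * (Φ x / x) := hle
    _ = Φ x := by field_simp

lemma IsYoung.exists_eq {Φ : ℝ → ℝ} (h : IsYoung Φ) {y : ℝ} (hy : 0 ≤ y) :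
    ∃ x, 0 ≤ x ∧ Φ x = y := by
  obtain ⟨b, hb1, hb2⟩ := ((h.tendsto_atTop.eventually_ge_atTop y).and
    (Filter.eventually_ge_atTop (0:ℝ))).exists
  have hsub := intermediate_value_Icc hb2 h.1.continuousOn (a := 0) (b := b)
  have hymem : y ∈ Set.Icc (Φ 0) (Φ b) := by
    rw [h.zero]; exact ⟨hy, hb1⟩
  obtain ⟨x, hxmem, hxeq⟩ := hsub hymem
  exact ⟨x, hxmem.1, hxeq⟩

/-- Theorem 2.2(a)(i): if `μ(Ω) < ∞`, `Φ ⪯ Ψ`, and the weighted conditional type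
operator `R_u f = E(uf)` is bounded from `L^Φ(Σ)` into `L^Ψ(Σ)`, then
`E(u) ∈ L^∞(𝒜)`. -/
theorem wct_bounded_implies_condexp_bounded {Ω : Type*} {mΩ : MeasurableSpace Ω}
    {μ : Measure Ω} [IsFiniteMeasure μ]
    (m : MeasurableSpace Ω) (hm : m ≤ mΩ) [SigmaFinite (μ.trim hm)]
    (Φ Ψ : ℝ → ℝ) (hΦ : IsYoung Φ) (hΨ : IsYoung Ψ)
    (hdom : ∃ a : ℝ, 0 < a ∧ ∃ x₀ : ℝ, 0 ≤ x₀ ∧ ∀ x : ℝ, x₀ ≤ x → Φ x ≤ Ψ (a * x))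
    (u : Ω → ℝ)
    (hwd : ∀ f : Ω → ℝ, MemOrlicz Φ μ f → Integrable (fun x => u x * f x) μ)
    (hbdd : ∃ M : ℝ, 0 ≤ M ∧ ∀ f : Ω → ℝ, MemOrlicz Φ μ f →
      MemOrlicz Ψ μ (μ[fun x => u x * f x | m]) ∧
      luxNorm Ψ μ (μ[fun x => u x * f x | m]) ≤ M * luxNorm Φ μ f) :
    ∃ M : ℝ, ∀ᵐ x ∂μ, |(μ[u | m]) x| ≤ M := by
  classical
  letI : MeasurableSpace Ω := mΩ
  obtain ⟨a, ha, x₀, hx₀, hdom'⟩ := hdom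
  obtain ⟨M, hM0, hM⟩ := hbdd
  by_contra hcon
  set g : Ω → ℝ := μ[u | m] with hg
  have hc : ∀ c : ℝ, μ {z | c < |g z|} ≠ 0 := by
    intro c hcz
    apply hcon
    refine ⟨c, ?_⟩
    rw [ae_iff]
    convert hcz using 2
    ext z
    simp [not_le]
  -- measurability of g
  have hgm : StronglyMeasurable[m] g := stronglyMeasurable_condExp
  have hgm2 : StronglyMeasurable[mΩ] g := hgm.mono hm
  have hgmeas : Measurable[mΩ] g := hgm2.measurable
  have hgmeasm : Measurable[m] g := hgm.measurable
  -- the sets S j = {|g| > j}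
  set S : ℕ → Set Ω := fun j => {z | (j:ℝ) < |g z|} with hS
  have hSmeas : ∀ j, MeasurableSet[mΩ] (S j) :=
    fun j => hgmeas.abs measurableSet_Ioi
  have hSanti : Antitone S := by
    intro i j hij z hz
    exact lt_of_le_of_lt (Nat.cast_le.2 hij : (i:ℝ) ≤ (j:ℝ)) hz
  have hSempty : (⋂ j, S j) = ∅ := by
    ext z
    simp only [Set.mem_iInter, Set.mem_empty_iff_false, iff_false, not_forall]
    obtain ⟨j, hj⟩ := exists_nat_ge (|g z|)
    exact ⟨j, by simp [hS, not_lt.2 hj]⟩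
  have htend : Filter.Tendsto (fun j => μ (S j)) Filter.atTop (nhds 0) := by
    have := MeasureTheory.tendsto_measure_iInter_atTop
      (fun j => (hSmeas j).nullMeasurableSet) hSanti ⟨0, measure_ne_top μ (S 0)⟩
    rwa [hSempty, measure_empty] at this
  set ε : ℝ := 1 / (Φ x₀ + 1) with hε
  have hΦx₀ : 0 ≤ Φ x₀ := hΦ.nonneg x₀
  have hεpos : 0 < ε := by positivity
  obtain ⟨j₀, hj₀⟩ := (htend.eventually_lt_const
    (by simp [hεpos] : (0:ENNReal) < ENNReal.ofReal ε)).exists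
  set n : ℕ := max j₀ (⌈M * a⌉₊ + 1) with hn
  have hnMa : M * a < (n:ℝ) := by
    have h1 : M * a ≤ (⌈M * a⌉₊ : ℝ) := Nat.le_ceil _
    have h2 : ((⌈M * a⌉₊ + 1 : ℕ) : ℝ) ≤ (n : ℝ) := by
      exact_mod_cast Nat.cast_le.2 (le_max_right _ _)
    push_cast at h2
    linarith
  have hSn_small : μ (S n) < ENNReal.ofReal ε :=
    lt_of_le_of_lt (measure_mono (hSanti (le_max_left _ _))) hj₀
  have hSn_pos : μ (S n) ≠ 0 := hc n
  -- find N with positive measure of A = {n < |g| ≤ N}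
  have hSn_eq : S n = ⋃ N : ℕ, (S n ∩ {z | |g z| ≤ (N:ℝ)}) := by
    ext z
    simp only [Set.mem_iUnion, Set.mem_inter_iff, Set.mem_setOf_eq]
    constructor
    · intro hz
      obtain ⟨N, hN⟩ := exists_nat_ge (|g z|)
      exact ⟨N, hz, hN⟩
    · rintro ⟨N, hz, -⟩
      exact hz
  obtain ⟨N, hNA⟩ : ∃ N : ℕ, μ (S n ∩ {z | |g z| ≤ (N:ℝ)}) ≠ 0 := by
    by_contra hall
    push_neg at hall
    apply hSn_pos
    rw [hSn_eq]
    exact measure_iUnion_null hall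
  set A : Set Ω := S n ∩ {z | |g z| ≤ (N:ℝ)} with hA
  have habsm : Measurable[m] (fun z => |g z|) :=
    @Measurable.abs ℝ Ω _ _ _ m g _ _ hgmeasm
  have hA_m : MeasurableSet[m] A := habsm measurableSet_Ioc
  have hAmeas : MeasurableSet[mΩ] A := hm _ hA_m
  have hAfin : μ A ≠ ⊤ := measure_ne_top μ A
  set t : ℝ := (μ A).toReal with ht
  have ht_pos : 0 < t := ENNReal.toReal_pos hNA hAfin
  have ht_lt : t < ε := by
    have hle : μ A < ENNReal.ofReal ε :=
      lt_of_le_of_lt (measure_mono Set.inter_subset_left) hSn_small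
    exact (ENNReal.lt_ofReal_iff_toReal_lt hAfin).1 hle
  -- the point x with Φ x = 1/t
  obtain ⟨x, hx0, hxval⟩ := hΦ.exists_eq (le_of_lt (by positivity : (0:ℝ) < 1 / t))
  have hx_pos : 0 < x := by
    rcases lt_or_eq_of_le hx0 with h' | h'
    · exact h'
    · exfalso
      have : Φ x = 0 := by rw [← h', hΦ.zero]
      rw [hxval] at this
      have : (0:ℝ) < 1 / t := by positivity
      linarith
  have hx_ge : x₀ ≤ x := by
    by_contra hlt
    push_neg at hlt
    have h1 : Φ x ≤ Φ x₀ := (hΦ.strictMonoOn.monotoneOn) hx0 (Set.mem_Ici.2 hx₀) hlt.le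
    have h2 : Φ x₀ + 1 < 1 / t := by
      rw [lt_div_iff₀ ht_pos]
      calc (Φ x₀ + 1) * t < (Φ x₀ + 1) * ε :=
            mul_lt_mul_of_pos_left ht_lt (by positivity)
        _ = 1 := by rw [hε]; field_simp
    rw [hxval] at h1
    linarith
  -- the test function f = indicator of A
  set f : Ω → ℝ := A.indicator (fun _ => (1:ℝ)) with hf
  have hf_mem : MemOrlicz Φ μ f := by
    refine ⟨1, one_pos, ?_⟩
    have heq : (fun z => Φ (1 * |f z|)) = A.indicator (fun _ => Φ 1) := by
      funext z
      by_cases hz : z ∈ A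
      · simp [hf, Set.indicator_of_mem hz]
      · simp [hf, Set.indicator_of_notMem hz, hΦ.zero]
    rw [heq]
    exact Integrable.indicator (μ := μ) (integrable_const (Φ 1)) hAmeas
  have hM' := (hM f hf_mem).2
  have hfun : (fun z => u z * f z) = A.indicator u := by
    funext z
    by_cases hz : z ∈ A
    · simp [hf, Set.indicator_of_mem hz]
    · simp [hf, Set.indicator_of_notMem hz]
  rw [hfun] at hM'
  -- u is integrable
  have hu_int : Integrable u μ := by
    have h1 : MemOrlicz Φ μ (fun _ => (1:ℝ)) :=
      ⟨1, one_pos, by simpa using integrable_const (Φ 1)⟩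
    have := hwd (fun _ => (1:ℝ)) h1
    simpa using this
  have hcond : μ[A.indicator u | m] =ᵐ[μ] A.indicator g :=
    condExp_indicator hu_int hA_m
  -- luxNorm congruence
  have hlux_eq : luxNorm Ψ μ (μ[A.indicator u | m]) = luxNorm Ψ μ (A.indicator g) := by
    have hint_eq : ∀ k : ℝ, ∫ z, Ψ (|(μ[A.indicator u | m]) z| / k) ∂μ
        = ∫ z, Ψ (|A.indicator g z| / k) ∂μ := by
      intro k
      apply integral_congr_ae
      filter_upwards [hcond] with z hz
      rw [hz]
    unfold luxNorm
    congr 1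
    ext k
    simp only [Set.mem_setOf_eq]
    rw [hint_eq k]
  rw [hlux_eq] at hM'
  -- basic facts for the Ψ side
  have hΨmono := hΨ.strictMonoOn.monotoneOn
  have hind_bdd : ∀ z, |A.indicator g z| ≤ (N:ℝ) := by
    intro z
    by_cases hz : z ∈ A
    · rw [Set.indicator_of_mem hz]
      exact hz.2
    · rw [Set.indicator_of_notMem hz]
      simp
  have hind_meas : Measurable[mΩ] (A.indicator g) := hgmeas.indicator hAmeas
  have hmeas_int : ∀ k : ℝ, AEStronglyMeasurable (fun z => Ψ (|A.indicator g z| / k)) μ :=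
    fun k => (hΨ.1.measurable.comp ((hind_meas.abs).div_const k)).aestronglyMeasurable
  have hint : ∀ k : ℝ, 0 < k → Integrable (fun z => Ψ (|A.indicator g z| / k)) μ := by
    intro k hk
    apply Integrable.mono' (integrable_const (Ψ ((N:ℝ) / k))) (hmeas_int k)
    apply Filter.Eventually.of_forall
    intro z
    rw [Real.norm_of_nonneg (hΨ.nonneg _)]
    apply hΨmono (Set.mem_Ici.2 (by positivity)) (Set.mem_Ici.2 (by positivity))
    exact div_le_div_of_nonneg_right (hind_bdd z) hk.le
  -- the defining set for luxNorm Ψ (A.indicator g)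
  set SΨ : Set ℝ := {k : ℝ | 0 < k ∧ ∫ z, Ψ (|A.indicator g z| / k) ∂μ ≤ 1} with hSΨ
  -- SΨ is nonempty
  have hT : (0:ℝ) ≤ (μ Set.univ).toReal := ENNReal.toReal_nonneg
  set c : ℝ := 1 / ((μ Set.univ).toReal + 1) with hcdef
  have hc_pos : 0 < c := by positivity
  obtain ⟨δ, hδpos, hδ⟩ := Metric.continuousAt_iff.1 (hΨ.1.continuousAt (x := 0)) c hc_pos
  set k₀ : ℝ := ((N:ℝ) + 1) / δ with hk₀def
  have hk₀pos : 0 < k₀ := by positivity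
  have hk₀mem : k₀ ∈ SΨ := by
    refine ⟨hk₀pos, ?_⟩
    have hptwise : ∀ z, Ψ (|A.indicator g z| / k₀) ≤ c := by
      intro z
      have harg : |A.indicator g z| / k₀ < δ := by
        have h1 : |A.indicator g z| / k₀ ≤ (N:ℝ) / k₀ :=
          div_le_div_of_nonneg_right (hind_bdd z) hk₀pos.le
        have h2 : (N:ℝ) / k₀ < δ := by
          have hNk : (N:ℝ) / k₀ = (N:ℝ) * δ / ((N:ℝ) + 1) := by
            rw [hk₀def]; field_simp
          rw [hNk, div_lt_iff₀ (by positivity : (0:ℝ) < (N:ℝ) + 1)]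
          nlinarith [hδpos, (Nat.cast_nonneg N : (0:ℝ) ≤ (N:ℝ))]
        linarith
      have hdist : dist (|A.indicator g z| / k₀) 0 < δ := by
        rw [Real.dist_eq, sub_zero, abs_of_nonneg (by positivity)]
        exact harg
      have := hδ hdist
      rw [Real.dist_eq, hΨ.zero, sub_zero] at this
      have habs : |Ψ (|A.indicator g z| / k₀)| < c := this
      calc Ψ (|A.indicator g z| / k₀) ≤ |Ψ (|A.indicator g z| / k₀)| := le_abs_self _
        _ ≤ c := habs.le
    calc ∫ z, Ψ (|A.indicator g z| / k₀) ∂μ ≤ ∫ _z, c ∂μ :=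
          integral_mono (hint k₀ hk₀pos) (integrable_const c) hptwise
      _ = (μ Set.univ).toReal • c := by rw [integral_const]; rfl
      _ = (μ Set.univ).toReal / ((μ Set.univ).toReal + 1) := by
          rw [hcdef, smul_eq_mul]; ring
      _ ≤ 1 := by
          rw [div_le_one (by positivity)]
          linarith
  -- lower bound for elements of SΨ
  have hkey : ∀ k ∈ SΨ, (n:ℝ) / (a * x) ≤ k := by
    rintro k ⟨hk, hkint⟩
    have hn0 : (0:ℝ) ≤ (n:ℝ) := Nat.cast_nonneg n
    have h1 : Ψ ((n:ℝ) / k) * t ≤ 1 := by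
      have hstep1 : Ψ ((n:ℝ)/k) * t = ∫ _z in A, Ψ ((n:ℝ)/k) ∂μ := by
        rw [setIntegral_const, smul_eq_mul, ht, mul_comm]; rfl
      have hstep2 : ∫ _z in A, Ψ ((n:ℝ)/k) ∂μ ≤ ∫ z in A, Ψ (|A.indicator g z| / k) ∂μ := by
        apply setIntegral_mono_on (integrableOn_const (measure_ne_top μ A))
          ((hint k hk).integrableOn) hAmeas
        intro z hz
        apply hΨmono (Set.mem_Ici.2 (by positivity)) (Set.mem_Ici.2 (by positivity))
        rw [Set.indicator_of_mem hz]
        exact div_le_div_of_nonneg_right (le_of_lt hz.1) hk.le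
      have hstep3 : ∫ z in A, Ψ (|A.indicator g z| / k) ∂μ ≤ ∫ z, Ψ (|A.indicator g z| / k) ∂μ :=
        setIntegral_le_integral (hint k hk) (Filter.Eventually.of_forall fun z => hΨ.nonneg _)
      linarith
    have h2 : Ψ ((n:ℝ)/k) ≤ Φ x := by
      rw [hxval, le_div_iff₀ ht_pos]
      exact h1
    have h3 : Φ x ≤ Ψ (a * x) := hdom' x hx_ge
    have h4 : (n:ℝ)/k ≤ a * x := by
      by_contra hlt
      push_neg at hlt
      have := hΨ.strictMonoOn (Set.mem_Ici.2 (by positivity : (0:ℝ) ≤ a * x))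
        (Set.mem_Ici.2 (by positivity : (0:ℝ) ≤ (n:ℝ)/k)) hlt
      linarith
    rw [div_le_iff₀ (by positivity : (0:ℝ) < a * x)]
    calc (n:ℝ) = ((n:ℝ)/k) * k := by field_simp
      _ ≤ (a * x) * k := mul_le_mul_of_nonneg_right h4 hk.le
      _ = k * (a * x) := by ring
  have hlow : (n:ℝ) / (a * x) ≤ luxNorm Ψ μ (A.indicator g) := by
    unfold luxNorm
    exact le_csInf ⟨k₀, hk₀mem⟩ hkey
  -- upper bound for luxNorm Φ f
  have hup : luxNorm Φ μ f ≤ 1 / x := by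
    unfold luxNorm
    apply csInf_le ⟨0, fun b hb => le_of_lt hb.1⟩
    constructor
    · positivity
    · have heq : (fun z => Φ (|f z| / (1/x))) = A.indicator (fun _ => Φ x) := by
        funext z
        by_cases hz : z ∈ A
        · rw [hf]
          simp only [Set.indicator_of_mem hz]
          rw [abs_one, one_div_one_div]
        · rw [hf]
          simp only [Set.indicator_of_notMem hz]
          rw [abs_zero, zero_div, hΦ.zero]
      rw [heq, integral_indicator_const _ hAmeas, smul_eq_mul, measureReal_def, ← ht, hxval, mul_one_div,
        div_le_one ht_pos]
  -- combine
  have hfinal : (n:ℝ) / (a * x) ≤ M * (1 / x) :=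
    le_trans hlow (le_trans hM' (mul_le_mul_of_nonneg_left hup hM0))
  have : (n:ℝ) ≤ M * a := by
    have hax : (0:ℝ) < a * x := by positivity
    rw [div_le_iff₀ hax] at hfinal
    calc (n:ℝ) ≤ M * (1/x) * (a * x) := hfinal
      _ = M * a := by field_simp
  linarith
end

section
/- Let (Ω,Σ,μ) be a non-atomic σ-finite measure space, 𝒜 = Σ, and 1 < p < q < ∞. Then the only bounded multiplication operator M_u : L^p(μ) → L^q(μ), M_u(f) = uf, is M_u = 0 (i.e., u = 0 a.e.). -/
open MeasureTheory

/-- A measure is non-atomic if every set of positive measure has a measurable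
subset of strictly smaller positive measure. -/
def NonAtomic {Ω : Type*} {mΩ : MeasurableSpace Ω} (μ : Measure Ω) : Prop :=
  ∀ A : Set Ω, MeasurableSet A → 0 < μ A →
    ∃ B : Set Ω, MeasurableSet B ∧ B ⊆ A ∧ 0 < μ B ∧ μ B < μ A

open scoped ENNReal NNReal

lemma halving {Ω : Type*} {mΩ : MeasurableSpace Ω} {μ : Measure Ω} (hna : NonAtomic μ)
    {A : Set Ω} (hA : MeasurableSet A) (h0 : 0 < μ A) (hfin : μ A < ⊤) :
    ∀ n : ℕ, ∃ B : Set Ω, MeasurableSet B ∧ B ⊆ A ∧ 0 < μ B ∧ μ B ≤ μ A * 2⁻¹ ^ n := by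
  intro n
  induction n with
  | zero => exact ⟨A, hA, subset_rfl, h0, by simp⟩
  | succ n ih =>
    obtain ⟨B, hB, hBA, hB0, hBle⟩ := ih
    obtain ⟨B', hB', hB'B, hB'0, hB'lt⟩ := hna B hB hB0
    have hBfin : μ B < ⊤ := lt_of_le_of_lt (measure_mono hBA) hfin
    have hB'fin : μ B' ≠ ⊤ := (lt_of_lt_of_le hB'lt (le_of_lt hBfin)).ne
    by_cases hc : μ B' ≤ μ B / 2
    · refine ⟨B', hB', hB'B.trans hBA, hB'0, ?_⟩
      calc μ B' ≤ μ B / 2 := hc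
        _ ≤ μ A * 2⁻¹ ^ n / 2 := ENNReal.div_le_div_right hBle 2
        _ = μ A * 2⁻¹ ^ (n+1) := by rw [div_eq_mul_inv, pow_succ, mul_assoc]
    · push_neg at hc
      have hdiff : μ (B \ B') = μ B - μ B' := measure_diff hB'B hB'.nullMeasurableSet hB'fin
      refine ⟨B \ B', hB.diff hB', (Set.diff_subset).trans hBA, ?_, ?_⟩
      · rw [hdiff]; exact tsub_pos_of_lt hB'lt
      · rw [hdiff]
        calc μ B - μ B' ≤ μ B - μ B / 2 := tsub_le_tsub_left hc.le _
          _ = μ B / 2 := ENNReal.sub_half hBfin.ne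
          _ ≤ μ A * 2⁻¹ ^ n / 2 := ENNReal.div_le_div_right hBle 2
          _ = μ A * 2⁻¹ ^ (n+1) := by rw [div_eq_mul_inv, pow_succ, mul_assoc]

/-- On a non-atomic σ-finite measure space, for `1 < p < q < ∞`, the only bounded
multiplication operator `M_u : L^p(μ) → L^q(μ)` is `M_u = 0`, i.e. `u = 0` a.e. -/
theorem mul_op_Lp_Lq_nonatomic_zero {Ω : Type*} {mΩ : MeasurableSpace Ω}
    {μ : Measure Ω} [SigmaFinite μ] (hna : NonAtomic μ)
    (p q : ℝ) (hp : 1 < p) (hpq : p < q)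
    (u : Ω → ℝ) (hu : AEStronglyMeasurable u μ)
    (hbdd : ∃ C : ℝ, 0 ≤ C ∧ ∀ f : Ω → ℝ, MemLp f (ENNReal.ofReal p) μ →
      eLpNorm (fun x => u x * f x) (ENNReal.ofReal q) μ ≤
        ENNReal.ofReal C * eLpNorm f (ENNReal.ofReal p) μ) :
    u =ᵐ[μ] 0 := by
  obtain ⟨C, hC0, hC⟩ := hbdd
  have hp0 : 0 < p := lt_trans one_pos hp
  have hq0 : 0 < q := lt_trans hp0 hpq
  set p' : ℝ≥0∞ := ENNReal.ofReal p with hp'def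
  set q' : ℝ≥0∞ := ENNReal.ofReal q with hq'def
  have hp'0 : p' ≠ 0 := by simp [hp'def, ENNReal.ofReal_eq_zero, not_le, hp0]
  have hp'top : p' ≠ ⊤ := ENNReal.ofReal_ne_top
  have hq'0 : q' ≠ 0 := by simp [hq'def, ENNReal.ofReal_eq_zero, not_le, hq0]
  have hq'top : q' ≠ ⊤ := ENNReal.ofReal_ne_top
  have hp'toReal : p'.toReal = p := ENNReal.toReal_ofReal hp0.le
  have hq'toReal : q'.toReal = q := ENNReal.toReal_ofReal hq0.le
  set g : Ω → ℝ := hu.mk u with hgdef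
  have hg : StronglyMeasurable g := hu.stronglyMeasurable_mk
  have hug : u =ᵐ[μ] g := hu.ae_eq_mk
  have hgm : Measurable g := hg.measurable
  -- key claim
  have key : ∀ ε : ℝ, 0 < ε → μ {x | ε ≤ |g x|} = 0 := by
    intro ε hε
    by_contra hpos
    have hA₀meas : MeasurableSet {x | ε ≤ |g x|} :=
      measurableSet_le measurable_const hgm.abs
    have hA₀pos : 0 < μ {x | ε ≤ |g x|} := pos_iff_ne_zero.mpr hpos
    -- find a subset of positive finite measure
    obtain ⟨k, hk⟩ : ∃ k, 0 < μ ({x | ε ≤ |g x|} ∩ spanningSets μ k) := by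
      by_contra hall
      push_neg at hall
      simp only [le_zero_iff] at hall
      have : μ {x | ε ≤ |g x|} = 0 := by
        have hcover : {x | ε ≤ |g x|} = ⋃ k, {x | ε ≤ |g x|} ∩ spanningSets μ k := by
          rw [← Set.inter_iUnion, iUnion_spanningSets, Set.inter_univ]
        rw [hcover]
        exact measure_iUnion_null hall
      exact hpos this
    set A : Set Ω := {x | ε ≤ |g x|} ∩ spanningSets μ k with hAdef
    have hAmeas : MeasurableSet A := hA₀meas.inter (measurableSet_spanningSets μ k)
    have hAfin : μ A < ⊤ :=
      lt_of_le_of_lt (measure_mono Set.inter_subset_right) (measure_spanningSets_lt_top μ k)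
    -- pick δ
    set θ : ℝ := 1/p - 1/q with hθdef
    have hθ0 : 0 < θ := sub_pos.mpr (one_div_lt_one_div_of_lt hp0 hpq)
    set δ : ℝ := (ε / (2*(C+1))) ^ θ⁻¹ with hδdef
    have hbase : 0 < ε / (2*(C+1)) := by positivity
    have hδ0 : 0 < δ := Real.rpow_pos_of_pos hbase _
    have hδθ : δ ^ θ = ε / (2*(C+1)) := Real.rpow_inv_rpow hbase.le hθ0.ne'
    have hCδ : C * δ ^ θ < ε := by
      rw [hδθ]
      rw [div_eq_mul_inv, ← mul_assoc]
      have h1 : C * ε < 2*(C+1) * ε := by nlinarith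
      have h2 : (0:ℝ) < 2*(C+1) := by linarith
      calc C * ε * (2*(C+1))⁻¹ < 2*(C+1) * ε * (2*(C+1))⁻¹ := by
            apply mul_lt_mul_of_pos_right h1 (by positivity)
        _ = ε := by field_simp
    -- pick n with μ A * 2⁻¹ ^ n ≤ ofReal δ
    obtain ⟨n, hn⟩ : ∃ n : ℕ, (2⁻¹:ℝ≥0∞) ^ n < ENNReal.ofReal δ / μ A := by
      apply ENNReal.exists_inv_two_pow_lt
      apply ne_of_gt
      exact ENNReal.div_pos (by simp [ENNReal.ofReal_eq_zero, not_le, hδ0]) hAfin.ne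
    have hsmall : μ A * 2⁻¹ ^ n ≤ ENNReal.ofReal δ :=
      le_trans (mul_le_mul_right hn.le _) ENNReal.mul_div_le
    obtain ⟨B, hBmeas, hBA, hB0, hBle⟩ := halving hna hAmeas hk hAfin n
    set t : ℝ≥0∞ := μ B with htdef
    have htδ : t ≤ ENNReal.ofReal δ := le_trans hBle hsmall
    have htfin : t < ⊤ := lt_of_le_of_lt htδ ENNReal.ofReal_lt_top
    -- the test function
    set f : Ω → ℝ := B.indicator (fun _ => (1:ℝ)) with hfdef
    have hfmem : MemLp f p' μ := memLp_indicator_const p' hBmeas 1 (Or.inr htfin.ne)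
    have hfnorm : eLpNorm f p' μ = t ^ (1/p) := by
      rw [hfdef, eLpNorm_indicator_const hBmeas hp'0 hp'top, hp'toReal]
      simp [htdef]
    have hlow : ENNReal.ofReal ε * t ^ (1/q) ≤ eLpNorm (fun x => u x * f x) q' μ := by
      have h1 : eLpNorm (B.indicator (fun _ => ε)) q' μ = ENNReal.ofReal ε * t ^ (1/q) := by
        rw [eLpNorm_indicator_const hBmeas hq'0 hq'top, hq'toReal]
        congr 1
        simp [← ofReal_norm, Real.norm_eq_abs, abs_of_pos hε]
      rw [← h1]
      apply eLpNorm_mono_ae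
      filter_upwards [hug] with x hx
      by_cases hxB : x ∈ B
      · have hxA : ε ≤ |g x| := (hBA hxB).1
        simp only [Set.indicator_of_mem hxB, hfdef, hx, mul_one]
        rw [Real.norm_eq_abs, Real.norm_eq_abs, abs_of_pos hε]
        exact hxA
      · simp only [Set.indicator_of_notMem hxB, norm_zero]
        positivity
    have hupper : eLpNorm (fun x => u x * f x) q' μ ≤ ENNReal.ofReal C * t ^ (1/p) := by
      calc eLpNorm (fun x => u x * f x) q' μ ≤ ENNReal.ofReal C * eLpNorm f p' μ := hC f hfmem
        _ = ENNReal.ofReal C * t ^ (1/p) := by rw [hfnorm]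
    have hmain : ENNReal.ofReal ε * t ^ (1/q) ≤ ENNReal.ofReal C * t ^ (1/p) :=
      le_trans hlow hupper
    have ht0 : t ≠ 0 := hB0.ne'
    have hsplit : t ^ (1/p) = t ^ θ * t ^ (1/q) := by
      rw [← ENNReal.rpow_add θ (1/q) ht0 htfin.ne]
      congr 1
      simp [hθdef]
    rw [hsplit, ← mul_assoc] at hmain
    have hcancel : ENNReal.ofReal ε ≤ ENNReal.ofReal C * t ^ θ := by
      have hq0' : t ^ (1/q) ≠ 0 := (ENNReal.rpow_pos hB0 htfin.ne).ne'
      have hqtop' : t ^ (1/q) ≠ ⊤ := ENNReal.rpow_ne_top_of_nonneg (by positivity) htfin.ne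
      exact (ENNReal.mul_le_mul_iff_left hq0' hqtop').mp hmain
    have hfinal : ENNReal.ofReal ε < ENNReal.ofReal ε := by
      calc ENNReal.ofReal ε ≤ ENNReal.ofReal C * t ^ θ := hcancel
        _ ≤ ENNReal.ofReal C * (ENNReal.ofReal δ) ^ θ :=
            mul_le_mul_right (ENNReal.rpow_le_rpow htδ hθ0.le) _
        _ = ENNReal.ofReal C * ENNReal.ofReal (δ ^ θ) := by
            rw [← ENNReal.ofReal_rpow_of_pos hδ0]
        _ = ENNReal.ofReal (C * δ ^ θ) := by
            rw [ENNReal.ofReal_mul hC0]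
        _ < ENNReal.ofReal ε := (ENNReal.ofReal_lt_ofReal_iff hε).mpr hCδ
    exact absurd hfinal (lt_irrefl _)
  -- conclude g = 0 a.e.
  have hg0 : g =ᵐ[μ] 0 := by
    rw [Filter.EventuallyEq, ae_iff]
    have hsub : {x | ¬ g x = (0:Ω → ℝ) x} ⊆ ⋃ n : ℕ, {x | 1/(n+1) ≤ |g x|} := by
      intro x hx
      simp only [Pi.zero_apply, Set.mem_setOf_eq] at hx
      have : 0 < |g x| := abs_pos.mpr hx
      obtain ⟨n, hn⟩ := exists_nat_one_div_lt this
      exact Set.mem_iUnion.mpr ⟨n, hn.le⟩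
    apply measure_mono_null hsub
    apply measure_iUnion_null
    intro n
    exact key (1/(n+1)) (by positivity)
  exact hug.trans hg0
end

section
/- Let Ω = (⋃ₙ Aₙ) ∪ B be the atomic/non-atomic decomposition of a σ-finite measure space, 𝒜 = Σ (so E is the identity), and 1 < p < q < ∞. The multiplication operator M_u : L^p → L^q is bounded if and only if u = 0 a.e. on B and sup_n |u(Aₙ)| / μ(Aₙ)^{1/q' − 1/p'} < ∞, where u(Aₙ) is the (a.e. constant) value of u on the atom Aₙ. -/
open MeasureTheory Filter
open scoped ENNReal Topology

/-- An atom of `μ`: a measurable set `A` with `μ(A) > 0` such that every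
measurable subset of `A` has measure `0` or `μ(A)`. -/
def IsAtomSet {Ω : Type*} {mΩ : MeasurableSpace Ω} (μ : Measure Ω) (A : Set Ω) : Prop :=
  MeasurableSet A ∧ 0 < μ A ∧
    ∀ F : Set Ω, MeasurableSet F → F ⊆ A → μ F = 0 ∨ μ F = μ A

/-- A measure is non-atomic on a set `B` if no measurable subset of `B` is an atom. -/
def NonAtomicOn {Ω : Type*} {mΩ : MeasurableSpace Ω} (μ : Measure Ω) (B : Set Ω) : Prop :=
  ∀ S : Set Ω, MeasurableSet S → S ⊆ B → ¬ IsAtomSet μ S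

lemma atom_lt_top {Ω : Type*} {mΩ : MeasurableSpace Ω} {μ : Measure Ω} [SigmaFinite μ]
    {A : Set Ω} (hA : IsAtomSet μ A) : μ A < ⊤ := by
  obtain ⟨hm, hpos, hsub⟩ := hA
  by_contra htop
  push_neg at htop
  have htop : μ A = ⊤ := top_le_iff.mp htop
  have h1 : ∀ k, μ (A ∩ spanningSets μ k) = 0 := by
    intro k
    rcases hsub _ (hm.inter (measurableSet_spanningSets μ k)) Set.inter_subset_left with h | h
    · exact h
    · exfalso
      have := measure_mono (μ := μ) (Set.inter_subset_right (s := A) (t := spanningSets μ k))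
      rw [h, htop] at this
      exact absurd (top_le_iff.mp this) (measure_spanningSets_lt_top μ k).ne
  have : μ A = 0 := by
    have : A = ⋃ k, A ∩ spanningSets μ k := by
      rw [← Set.inter_iUnion, iUnion_spanningSets, Set.inter_univ]
    rw [this]
    exact le_antisymm (le_trans (measure_iUnion_le _) (by simp [h1])) zero_le
  exact absurd this hpos.ne'

lemma halve {Ω : Type*} {mΩ : MeasurableSpace Ω} {μ : Measure Ω}
    {T : Set Ω} (hm : MeasurableSet T) (hpos : 0 < μ T)
    (hna : ¬ IsAtomSet μ T) :
    ∃ F, MeasurableSet F ∧ F ⊆ T ∧ 0 < μ F ∧ μ F ≤ μ T / 2 := by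
  simp only [IsAtomSet, not_and, not_forall] at hna
  obtain ⟨F, hFm, hFs, hF⟩ := hna hm hpos
  push_neg at hF
  obtain ⟨hF0, hFT⟩ := hF
  have hsum : μ F + μ (T \ F) = μ T := by
    rw [← measure_inter_add_diff T hFm, Set.inter_eq_self_of_subset_right hFs]
  have hdpos : 0 < μ (T \ F) := by
    rcases eq_or_ne (μ (T \ F)) 0 with h | h
    · exfalso; rw [h, add_zero] at hsum; exact hFT hsum
    · exact pos_iff_ne_zero.mpr h
  have hkey : μ F ≤ μ T / 2 ∨ μ (T \ F) ≤ μ T / 2 := by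
    by_contra hcon
    push_neg at hcon
    have h2 := ENNReal.add_lt_add hcon.1 hcon.2
    rw [ENNReal.add_halves] at h2
    rw [hsum] at h2
    exact lt_irrefl _ h2
  rcases hkey with h | h
  · exact ⟨F, hFm, hFs, pos_iff_ne_zero.mpr hF0, h⟩
  · exact ⟨T \ F, hm.diff hFm, Set.diff_subset, hdpos, h⟩

lemma exists_small_subset {Ω : Type*} {mΩ : MeasurableSpace Ω} {μ : Measure Ω} [SigmaFinite μ]
    {S : Set Ω} (hm : MeasurableSet S) (hpos : 0 < μ S)
    (hna : ∀ T : Set Ω, MeasurableSet T → T ⊆ S → ¬ IsAtomSet μ T)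
    {ε : ℝ≥0∞} (hε : 0 < ε) :
    ∃ T, MeasurableSet T ∧ T ⊆ S ∧ 0 < μ T ∧ μ T < ε := by
  obtain ⟨t, htm, hts, ht0, htfin⟩ := Measure.exists_subset_measure_lt_top hm hpos
  have key : ∀ n : ℕ, ∃ T, MeasurableSet T ∧ T ⊆ t ∧ 0 < μ T ∧ μ T ≤ μ t * 2⁻¹ ^ n := by
    intro n
    induction n with
    | zero => exact ⟨t, htm, le_refl t, ht0, by simp⟩
    | succ k ih =>
      obtain ⟨T, hTm, hTs, hT0, hTle⟩ := ih
      obtain ⟨F, hFm, hFs, hF0, hFle⟩ :=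
        halve hTm hT0 (hna T hTm (hTs.trans hts))
      refine ⟨F, hFm, hFs.trans hTs, hF0, ?_⟩
      calc μ F ≤ μ T / 2 := hFle
        _ ≤ μ t * 2⁻¹ ^ k / 2 := by exact ENNReal.div_le_div_right hTle 2
        _ = μ t * 2⁻¹ ^ (k + 1) := by
          rw [pow_succ, ENNReal.div_eq_inv_mul]; ring
  have hne : ε / μ t ≠ 0 := by
    simp only [ne_eq, ENNReal.div_eq_zero_iff]
    push_neg
    exact ⟨hε.ne', htfin.ne⟩
  obtain ⟨n, hn⟩ := ENNReal.exists_inv_two_pow_lt hne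
  obtain ⟨T, hTm, hTs, hT0, hTle⟩ := key n
  refine ⟨T, hTm, hTs.trans hts, hT0, lt_of_le_of_lt hTle ?_⟩
  calc μ t * 2⁻¹ ^ n < μ t * (ε / μ t) :=
        (ENNReal.mul_lt_mul_iff_right ht0.ne' htfin.ne).mpr hn
    _ = ε := by rw [mul_comm, ENNReal.div_mul_cancel ht0.ne' htfin.ne]

lemma ae_const_on_atom {Ω : Type*} {mΩ : MeasurableSpace Ω} {μ : Measure Ω}
    {A : Set Ω} (hA : IsAtomSet μ A) (hfin : μ A < ⊤)
    {f : Ω → ℝ} (hf : Measurable f) :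
    ∃ a : ℝ, ∀ᵐ x ∂(μ.restrict A), f x = a := by
  obtain ⟨hAm, hApos, hsub⟩ := hA
  set ν := μ.restrict A with hν
  set m := μ A with hm
  have hνuniv : ν Set.univ = m := by rw [hν, Measure.restrict_apply_univ]
  have hval : ∀ F : Set Ω, MeasurableSet F → ν F = 0 ∨ ν F = m := by
    intro F hF
    rw [hν, Measure.restrict_apply hF]
    exact hsub _ (hF.inter hAm) Set.inter_subset_right
  have hνfin : ν Set.univ < ⊤ := hνuniv ▸ hfin
  set s : ℝ → Set Ω := fun t => {x | t < f x} with hs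
  have hsm : ∀ t, MeasurableSet (s t) := fun t => measurableSet_lt measurable_const hf
  have hmono : ∀ {t t' : ℝ}, t ≤ t' → s t' ⊆ s t := fun h x hx => lt_of_le_of_lt h hx
  set Z := {t : ℝ | ν (s t) = 0} with hZ
  have hup : ∀ {t t' : ℝ}, t ∈ Z → t ≤ t' → t' ∈ Z := by
    intro t t' ht hle
    exact le_antisymm (ht ▸ measure_mono (hmono hle)) zero_le
  have hZne : Z.Nonempty := by
    have hanti : Antitone (fun n : ℕ => s (n : ℝ)) := fun i j hij =>
      hmono (by exact_mod_cast hij)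
    have hinter : ⋂ n : ℕ, s (n : ℝ) = ∅ := by
      ext x
      simp only [Set.mem_iInter, Set.mem_empty_iff_false, iff_false, not_forall]
      obtain ⟨n, hn⟩ := exists_nat_gt (f x)
      exact ⟨n, by simpa [hs] using hn.le⟩
    have htend : Tendsto (fun n : ℕ => ν (s (n : ℝ))) atTop (𝓝 0) := by
      have := tendsto_measure_iInter_atTop (μ := ν)
        (fun n : ℕ => (hsm _).nullMeasurableSet) hanti
        ⟨0, (lt_of_le_of_lt (measure_mono (Set.subset_univ _)) hνfin).ne⟩
      rw [hinter] at this
      simpa [Function.comp_def] using this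
    have := htend.eventually_lt_const hApos
    obtain ⟨n, hn⟩ := this.exists
    rcases hval _ (hsm (n : ℝ)) with h | h
    · exact ⟨(n : ℝ), h⟩
    · exact absurd (h ▸ hn) (lt_irrefl m)
  have hZbdd : BddBelow Z := by
    have hmono' : Monotone (fun n : ℕ => s (-(n : ℝ))) := fun i j hij =>
      hmono (by simp; exact_mod_cast hij)
    have hunion : ⋃ n : ℕ, s (-(n : ℝ)) = Set.univ := by
      ext x
      simp only [Set.mem_iUnion, Set.mem_univ, iff_true]
      obtain ⟨n, hn⟩ := exists_nat_gt (-(f x))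
      exact ⟨n, by simp [hs]; linarith⟩
    have htend : Tendsto (fun n : ℕ => ν (s (-(n : ℝ)))) atTop (𝓝 m) := by
      have := tendsto_measure_iUnion_atTop (μ := ν) hmono'
      rw [hunion, hνuniv] at this
      exact this
    obtain ⟨n, hn⟩ := (htend.eventually_const_lt hApos).exists
    refine ⟨-(n : ℝ), fun t ht => ?_⟩
    by_contra hlt
    push_neg at hlt
    have : ν (s (-(n : ℝ))) = 0 := hup ht hlt.le
    rw [this] at hn
    exact lt_irrefl _ hn
  set a := sInf Z with ha
  have hclaim1 : ∀ ε > (0:ℝ), ν (s (a + ε)) = 0 := by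
    intro ε hε
    obtain ⟨t, htZ, htlt⟩ := Real.lt_sInf_add_pos hZne hε
    exact hup htZ (le_of_lt (by rwa [← ha] at htlt))
  have hclaim2 : ∀ ε > (0:ℝ), ν {x | f x ≤ a - ε} = 0 := by
    intro ε hε
    have hnot : (a - ε) ∉ Z := fun h => absurd (csInf_le hZbdd h) (by linarith)
    have hfull : ν (s (a - ε)) = m := (hval _ (hsm _)).resolve_left hnot
    have hcompl : {x | f x ≤ a - ε} = (s (a - ε))ᶜ := by
      ext x; simp [hs, not_lt]
    rw [hcompl, measure_compl (hsm _) (by rw [hfull]; exact hfin.ne), hνuniv, hfull, tsub_self]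
  refine ⟨a, ?_⟩
  have hsubset : {x | f x ≠ a} ⊆ ⋃ n : ℕ, (s (a + 1/(n+1)) ∪ {x | f x ≤ a - 1/(n+1)}) := by
    intro x hx
    rcases lt_or_gt_of_ne hx with h | h
    · obtain ⟨n, hn⟩ := exists_nat_one_div_lt (show (0:ℝ) < a - f x by linarith)
      exact Set.mem_iUnion.mpr ⟨n, Or.inr (by simp only [Set.mem_setOf_eq]; linarith)⟩
    · obtain ⟨n, hn⟩ := exists_nat_one_div_lt (show (0:ℝ) < f x - a by linarith)
      exact Set.mem_iUnion.mpr ⟨n, Or.inl (by simp only [hs, Set.mem_setOf_eq]; linarith)⟩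
  have hnull : ν {x | f x ≠ a} = 0 := by
    refine measure_mono_null hsubset (measure_iUnion_null fun n => ?_)
    rw [measure_union_null_iff]
    have hpos : (0:ℝ) < 1/((n:ℝ)+1) := by positivity
    exact ⟨hclaim1 _ hpos, hclaim2 _ hpos⟩
  exact hnull

lemma tsum_rpow_le_rpow_tsum' {b : ℕ → ℝ≥0∞} {s : ℝ} (hs : 1 ≤ s) :
    ∑' n, b n ^ s ≤ (∑' n, b n) ^ s := by
  have hs0 : 0 < s := lt_of_lt_of_le one_pos hs
  set S := ∑' n, b n with hS
  rcases eq_or_ne S ⊤ with hT | hT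
  · rw [hT, ENNReal.top_rpow_of_pos hs0]; exact le_top
  rcases eq_or_ne S 0 with h0 | h0
  · have hb : ∀ n, b n = 0 := by
      intro n
      exact le_antisymm (h0 ▸ ENNReal.le_tsum n) zero_le
    simp [hb, ENNReal.zero_rpow_of_pos hs0]
  have hle : ∀ n, b n ^ s ≤ b n * S ^ (s - 1) := by
    intro n
    rcases eq_or_ne (b n) 0 with hb0 | hb0
    · simp [hb0, ENNReal.zero_rpow_of_pos hs0]
    have hbt : b n ≠ ⊤ := fun h => hT (top_le_iff.mp (h ▸ ENNReal.le_tsum n))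
    calc b n ^ s = b n ^ (1 + (s - 1)) := by ring_nf
      _ = b n ^ (1:ℝ) * b n ^ (s - 1) := ENNReal.rpow_add _ _ hb0 hbt
      _ ≤ b n ^ (1:ℝ) * S ^ (s - 1) := by
          gcongr
          exact ENNReal.le_tsum n
      _ = b n * S ^ (s - 1) := by rw [ENNReal.rpow_one]
  calc ∑' n, b n ^ s ≤ ∑' n, b n * S ^ (s - 1) := ENNReal.tsum_le_tsum hle
    _ = S * S ^ (s - 1) := by rw [ENNReal.tsum_mul_right]
    _ = S ^ (1:ℝ) * S ^ (s - 1) := by rw [ENNReal.rpow_one]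
    _ = S ^ s := by rw [← ENNReal.rpow_add _ _ h0 hT]; ring_nf

lemma enn_to_real_bound {x C : ℝ} (hx : 0 ≤ x) (hC : 0 ≤ C) {T : ℝ≥0∞} (hT0 : T ≠ 0) (hTt : T ≠ ⊤)
    {ip iq : ℝ} (hip : 0 ≤ ip)
    (h : ENNReal.ofReal x * T ^ iq ≤ ENNReal.ofReal C * T ^ ip) :
    x ≤ C * T.toReal ^ (ip - iq) := by
  have ht : 0 < T.toReal := ENNReal.toReal_pos hT0 hTt
  have hRfin : ENNReal.ofReal C * T ^ ip ≠ ⊤ :=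
    ENNReal.mul_ne_top ENNReal.ofReal_ne_top (ENNReal.rpow_ne_top_of_nonneg hip hTt)
  have hreal := ENNReal.toReal_mono hRfin h
  rw [ENNReal.toReal_mul, ENNReal.toReal_mul, ← ENNReal.toReal_rpow, ← ENNReal.toReal_rpow,
    ENNReal.toReal_ofReal hx, ENNReal.toReal_ofReal hC] at hreal
  have hq' : 0 < T.toReal ^ iq := Real.rpow_pos_of_pos ht iq
  have h2 : x * T.toReal ^ iq ≤ C * T.toReal ^ ip := hreal
  have h3 : C * T.toReal ^ ip = (C * T.toReal ^ (ip - iq)) * T.toReal ^ iq := by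
    rw [mul_assoc, ← Real.rpow_add ht]; ring_nf
  rw [h3] at h2
  exact le_of_mul_le_mul_right h2 hq'

/-- Remark 2.6 (case `𝒜 = Σ`): for `1 < p < q < ∞` and the decomposition
`Ω = (⋃ n, Aₙ) ∪ B` into atoms `Aₙ` and a non-atomic part `B`, the multiplication
operator `M_u : L^p → L^q` is bounded iff `u = 0` a.e. on `B` and
`sup_n |u(Aₙ)| / μ(Aₙ)^{1/q' − 1/p'} < ∞`, where `c n = u(Aₙ)` is the a.e.
constant value of `u` on the atom `Aₙ` and `p', q'` are the conjugate exponents. -/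
theorem mul_op_Lp_Lq_bounded_iff {Ω : Type*} {mΩ : MeasurableSpace Ω}
    {μ : Measure Ω} [SigmaFinite μ]
    (p q p' q' : ℝ) (hp : 1 < p) (hpq : p < q)
    (hp' : p' = p / (p - 1)) (hq' : q' = q / (q - 1))
    (A : ℕ → Set Ω) (hA : ∀ n, IsAtomSet μ (A n))
    (hdisj : Pairwise (Function.onFun Disjoint A))
    (B : Set Ω) (hB : B = Set.univ \ ⋃ n, A n) (hBna : NonAtomicOn μ B)
    (u : Ω → ℝ) (hu : AEStronglyMeasurable u μ)
    (c : ℕ → ℝ) (hc : ∀ n, ∀ᵐ x ∂(μ.restrict (A n)), u x = c n) :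
    (∃ C : ℝ, 0 ≤ C ∧ ∀ f : Ω → ℝ, MemLp f (ENNReal.ofReal p) μ →
        eLpNorm (fun x => u x * f x) (ENNReal.ofReal q) μ ≤
          ENNReal.ofReal C * eLpNorm f (ENNReal.ofReal p) μ) ↔
      ((∀ᵐ x ∂(μ.restrict B), u x = 0) ∧
        ∃ M : ℝ, ∀ n, |c n| ≤ M * (μ (A n)).toReal ^ (1 / q' - 1 / p')) := by
  have hq : 1 < q := hp.trans hpq
  have hp0 : (0:ℝ) < p := lt_trans one_pos hp
  have hq0 : (0:ℝ) < q := lt_trans one_pos hq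
  have hpne : p ≠ 0 := hp0.ne'
  have hqne : q ≠ 0 := hq0.ne'
  have hexp : 1 / q' - 1 / p' = 1 / p - 1 / q := by
    rw [hp', hq', one_div_div, one_div_div]
    field_simp
    ring
  set P := ENNReal.ofReal p with hPdef
  set Q := ENNReal.ofReal q with hQdef
  have hP0 : P ≠ 0 := (ENNReal.ofReal_pos.mpr hp0).ne'
  have hPt : P ≠ ⊤ := ENNReal.ofReal_ne_top
  have hQ0 : Q ≠ 0 := (ENNReal.ofReal_pos.mpr hq0).ne'
  have hQt : Q ≠ ⊤ := ENNReal.ofReal_ne_top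
  have hPr : P.toReal = p := ENNReal.toReal_ofReal hp0.le
  have hQr : Q.toReal = q := ENNReal.toReal_ofReal hq0.le
  have hfinn : ∀ n, μ (A n) < ⊤ := fun n => atom_lt_top (hA n)
  have hposn : ∀ n, 0 < μ (A n) := fun n => (hA n).2.1
  have hBm : MeasurableSet B := by
    rw [hB]; exact MeasurableSet.univ.diff (MeasurableSet.iUnion fun n => (hA n).1)
  have hind : ∀ (s : Set Ω), (fun x => u x * s.indicator (fun _ => (1:ℝ)) x) = s.indicator u := by
    intro s
    funext x
    by_cases hx : x ∈ s <;> simp [Set.indicator_of_mem, Set.indicator_of_notMem, hx]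
  constructor
  · rintro ⟨C, hC0, hC⟩
    constructor
    · -- u = 0 a.e. on B
      by_contra hcon
      obtain ⟨g, hgsm, hg⟩ := hu
      have hgm : Measurable g := hgsm.measurable
      have hgB : u =ᵐ[μ.restrict B] g := ae_restrict_of_ae hg
      have hgcon : ¬ (∀ᵐ x ∂(μ.restrict B), g x = 0) := fun h =>
        hcon (h.mp (hgB.mono fun x h1 h2 => h1.trans h2))
      rw [ae_iff] at hgcon
      -- find k with positive measure where |g| > 1/(k+1)
      have hcover : {x | ¬ g x = 0} ⊆ ⋃ k : ℕ, {x | 1/((k:ℝ)+1) < |g x|} := by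
        intro x hx
        obtain ⟨k, hk⟩ := exists_nat_one_div_lt (abs_pos.mpr hx)
        exact Set.mem_iUnion.mpr ⟨k, hk⟩
      obtain ⟨k, hk⟩ : ∃ k : ℕ, μ.restrict B {x | 1/((k:ℝ)+1) < |g x|} ≠ 0 := by
        by_contra hall
        push_neg at hall
        exact hgcon (measure_mono_null hcover (measure_iUnion_null hall))
      set ε : ℝ := 1/((k:ℝ)+1) with hεdef
      have hε0 : 0 < ε := by positivity
      have hEm : MeasurableSet {x | ε < |g x|} :=
        measurableSet_lt measurable_const hgm.abs
      set S := B ∩ {x | ε < |g x|} with hSdef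
      have hSm : MeasurableSet S := hBm.inter hEm
      have hSpos : 0 < μ S := by
        rw [Measure.restrict_apply hEm, Set.inter_comm] at hk
        exact pos_iff_ne_zero.mpr hk
      -- choose δ
      set r : ℝ := 1/p - 1/q with hrdef
      have hr0 : 0 < r := by
        rw [hrdef]
        have : 1/q < 1/p := one_div_lt_one_div_of_lt hp0 hpq
        linarith
      set δ : ℝ := min 1 ((ε/(C+1)) ^ (1/r)) with hδdef
      have hδ0 : 0 < δ := by
        apply lt_min one_pos
        apply Real.rpow_pos_of_pos
        positivity
      obtain ⟨T, hTm, hTs, hT0, hTlt⟩ := exists_small_subset hSm hSpos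
        (fun T hT1 hT2 => hBna T hT1 (hT2.trans (hSdef ▸ Set.inter_subset_left)))
        (ENNReal.ofReal_pos.mpr hδ0)
      have hTfin : μ T < ⊤ := lt_of_lt_of_le hTlt le_top
      set t : ℝ := (μ T).toReal with htdef
      have ht0 : 0 < t := ENNReal.toReal_pos hT0.ne' hTfin.ne
      have htδ : t < δ := ENNReal.toReal_lt_of_lt_ofReal hTlt
      -- apply the bound to the indicator of T
      have hfm : MemLp (T.indicator fun _ => (1:ℝ)) P μ :=
        memLp_indicator_const P hTm 1 (Or.inr hTfin.ne)
      have h1 := hC _ hfm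
      rw [hind T, eLpNorm_indicator_eq_eLpNorm_restrict hTm,
        eLpNorm_indicator_const hTm hP0 hPt, hPr] at h1
      have hlow : eLpNorm (fun _ => ε) Q (μ.restrict T) ≤ eLpNorm u Q (μ.restrict T) := by
        apply eLpNorm_mono_ae
        have hmem := ae_restrict_mem (μ := μ) hTm
        have hug : u =ᵐ[μ.restrict T] g := ae_restrict_of_ae hg
        refine hug.mp (hmem.mono fun x hxT hxu => ?_)
        have hxS : x ∈ S := hTs hxT
        have : ε < |g x| := hxS.2
        rw [Real.norm_eq_abs, Real.norm_eq_abs, hxu, abs_of_pos hε0]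
        exact this.le
      rw [eLpNorm_const _ hQ0 (by
          rw [Ne, Measure.restrict_eq_zero]; exact hT0.ne'),
        Measure.restrict_apply_univ, hQr] at hlow
      have h2 : ENNReal.ofReal ε * μ T ^ (1/q) ≤ ENNReal.ofReal C * μ T ^ (1/p) := by
        calc ENNReal.ofReal ε * μ T ^ (1/q)
            = ‖ε‖ₑ * μ T ^ (1/q) := by
              rw [Real.enorm_eq_ofReal_abs, abs_of_pos hε0]
          _ ≤ eLpNorm u Q (μ.restrict T) := hlow
          _ ≤ ENNReal.ofReal C * ((‖(1:ℝ)‖₊ : ℝ≥0∞) * μ T ^ (1/p)) := h1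
          _ = ENNReal.ofReal C * μ T ^ (1/p) := by norm_num
      have h3 : ε ≤ C * t ^ r :=
        enn_to_real_bound hε0.le hC0 hT0.ne' hTfin.ne (by positivity : (0:ℝ) ≤ 1/p) h2
      -- but C * t ^ r < ε
      have h4 : C * t ^ r < ε := by
        have htr : t ^ r < ε/(C+1) := by
          have h5 : t < (ε/(C+1)) ^ (1/r) := lt_of_lt_of_le htδ (min_le_right _ _)
          have := Real.rpow_lt_rpow ht0.le h5 hr0
          rwa [← Real.rpow_mul (by positivity : (0:ℝ) ≤ ε/(C+1)),
            one_div_mul_cancel hr0.ne', Real.rpow_one] at this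
        calc C * t ^ r ≤ (C+1) * t ^ r := by
              apply mul_le_mul_of_nonneg_right (by linarith) (Real.rpow_pos_of_pos ht0 r).le
          _ < (C+1) * (ε/(C+1)) := by
              apply mul_lt_mul_of_pos_left htr (by linarith)
          _ = ε := by field_simp
      linarith
    · refine ⟨C, fun n => ?_⟩
      rw [hexp]
      have hfm : MemLp ((A n).indicator fun _ => (1:ℝ)) P μ :=
        memLp_indicator_const P (hA n).1 1 (Or.inr (hfinn n).ne)
      have h1 := hC _ hfm
      rw [hind (A n), eLpNorm_indicator_eq_eLpNorm_restrict (hA n).1,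
        eLpNorm_congr_ae (hc n),
        eLpNorm_const _ hQ0 (by
          rw [Ne, Measure.restrict_eq_zero]; exact (hposn n).ne'),
        eLpNorm_indicator_const (hA n).1 hP0 hPt,
        Measure.restrict_apply_univ, hPr, hQr] at h1
      have h2 : ENNReal.ofReal |c n| * μ (A n) ^ (1/q) ≤
          ENNReal.ofReal C * μ (A n) ^ (1/p) := by
        calc ENNReal.ofReal |c n| * μ (A n) ^ (1/q)
            = ‖c n‖ₑ * μ (A n) ^ (1/q) := by
              rw [← Real.enorm_eq_ofReal_abs]
          _ ≤ ENNReal.ofReal C * ((‖(1:ℝ)‖₊ : ℝ≥0∞) * μ (A n) ^ (1/p)) := h1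
          _ = ENNReal.ofReal C * μ (A n) ^ (1/p) := by norm_num
      have := enn_to_real_bound (abs_nonneg (c n)) hC0 (hposn n).ne' (hfinn n).ne
        (by positivity : (0:ℝ) ≤ 1/p) h2
      exact this
  · rintro ⟨hzero, M, hM⟩
    rw [hexp] at hM
    set r : ℝ := 1/p - 1/q with hrdef
    set M' : ℝ := max M 0 with hM'def
    have hM'0 : 0 ≤ M' := le_max_right _ _
    have hM' : ∀ n, |c n| ≤ M' * (μ (A n)).toReal ^ r := fun n =>
      (hM n).trans (mul_le_mul_of_nonneg_right (le_max_left _ _)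
        (Real.rpow_nonneg ENNReal.toReal_nonneg _))
    refine ⟨M', hM'0, fun f hf => ?_⟩
    -- the a.e. constant values of f on atoms
    have hfae : f =ᵐ[μ] hf.1.mk f := hf.1.ae_eq_mk
    have hgm : Measurable (hf.1.mk f) := hf.1.stronglyMeasurable_mk.measurable
    choose a ha using fun n => ae_const_on_atom (hA n) (hfinn n) hgm
    have han : ∀ n, ∀ᵐ x ∂(μ.restrict (A n)), f x = a n := fun n =>
      ((ae_restrict_of_ae hfae).mp ((ha n).mono fun x h1 h2 => h2.trans h1))
    set U : Set Ω := ⋃ n, A n with hUdef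
    have hUm : MeasurableSet U := MeasurableSet.iUnion fun n => (hA n).1
    have hBU : B = Uᶜ := by rw [hB, Set.compl_eq_univ_diff]
    set φ : Ω → ℝ≥0∞ := fun x => (‖u x * f x‖₊ : ℝ≥0∞) ^ q with hφdef
    set ψ : Ω → ℝ≥0∞ := fun x => (‖f x‖₊ : ℝ≥0∞) ^ p with hψdef
    rw [eLpNorm_eq_lintegral_rpow_enorm_toReal hQ0 hQt, eLpNorm_eq_lintegral_rpow_enorm_toReal hP0 hPt,
      hPr, hQr]
    have hsplit : ∫⁻ x, φ x ∂μ = (∫⁻ x in U, φ x ∂μ) + ∫⁻ x in Uᶜ, φ x ∂μ :=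
      (lintegral_add_compl φ hUm).symm
    have hBzero : ∫⁻ x in Uᶜ, φ x ∂μ = 0 := by
      rw [← hBU]
      have hφ0 : φ =ᵐ[μ.restrict B] 0 := hzero.mono fun x hx => by
        simp [hφdef, hx, ENNReal.zero_rpow_of_pos hq0]
      rw [lintegral_congr_ae hφ0]
      simp
    have hUint : ∫⁻ x in U, φ x ∂μ = ∑' n, ∫⁻ x in A n, φ x ∂μ :=
      lintegral_iUnion (fun n => (hA n).1) hdisj φ
    have hterm : ∀ n, ∫⁻ x in A n, φ x ∂μ = (‖c n * a n‖₊ : ℝ≥0∞) ^ q * μ (A n) := by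
      intro n
      have hφc : φ =ᵐ[μ.restrict (A n)] fun _ => (‖c n * a n‖₊ : ℝ≥0∞) ^ q :=
        (hc n).mp ((han n).mono fun x h1 h2 => by simp [hφdef, h1, h2])
      rw [lintegral_congr_ae hφc, lintegral_const, Measure.restrict_apply_univ]
    have hterm2 : ∀ n, ∫⁻ x in A n, ψ x ∂μ = (‖a n‖₊ : ℝ≥0∞) ^ p * μ (A n) := by
      intro n
      have hψc : ψ =ᵐ[μ.restrict (A n)] fun _ => (‖a n‖₊ : ℝ≥0∞) ^ p :=
        (han n).mono fun x h1 => by simp [hψdef, h1]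
      rw [lintegral_congr_ae hψc, lintegral_const, Measure.restrict_apply_univ]
    set J : ℝ≥0∞ := ∫⁻ x, ψ x ∂μ with hJdef
    have hJ : ∑' n, (‖a n‖₊ : ℝ≥0∞) ^ p * μ (A n) ≤ J := by
      calc ∑' n, (‖a n‖₊ : ℝ≥0∞) ^ p * μ (A n) = ∑' n, ∫⁻ x in A n, ψ x ∂μ := by
            exact tsum_congr fun n => (hterm2 n).symm
        _ = ∫⁻ x in U, ψ x ∂μ := (lintegral_iUnion (fun n => (hA n).1) hdisj ψ).symm
        _ ≤ J := setLIntegral_le_lintegral _ _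
    -- term-wise bound
    have hcterm : ∀ n, (‖c n * a n‖₊ : ℝ≥0∞) ^ q * μ (A n) ≤
        (ENNReal.ofReal M') ^ q * ((‖a n‖₊ : ℝ≥0∞) ^ p * μ (A n)) ^ (q/p) := by
      intro n
      have hμ0 : μ (A n) ≠ 0 := (hposn n).ne'
      have hμt : μ (A n) ≠ ⊤ := (hfinn n).ne
      have htn : 0 < (μ (A n)).toReal := ENNReal.toReal_pos hμ0 hμt
      have h2 : (‖c n‖₊ : ℝ≥0∞) ≤ ENNReal.ofReal M' * μ (A n) ^ r := by
        calc (‖c n‖₊ : ℝ≥0∞) = ENNReal.ofReal |c n| := Real.enorm_eq_ofReal_abs _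
          _ ≤ ENNReal.ofReal (M' * (μ (A n)).toReal ^ r) := ENNReal.ofReal_le_ofReal (hM' n)
          _ = ENNReal.ofReal M' * ENNReal.ofReal ((μ (A n)).toReal ^ r) :=
              ENNReal.ofReal_mul hM'0
          _ = ENNReal.ofReal M' * (ENNReal.ofReal ((μ (A n)).toReal)) ^ r := by
              rw [ENNReal.ofReal_rpow_of_pos htn]
          _ = ENNReal.ofReal M' * μ (A n) ^ r := by rw [ENNReal.ofReal_toReal hμt]
      calc (‖c n * a n‖₊ : ℝ≥0∞) ^ q * μ (A n)
          = (‖c n‖₊ : ℝ≥0∞) ^ q * (‖a n‖₊ : ℝ≥0∞) ^ q * μ (A n) := by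
            rw [nnnorm_mul, ENNReal.coe_mul, ENNReal.mul_rpow_of_nonneg _ _ hq0.le]
        _ ≤ (ENNReal.ofReal M' * μ (A n) ^ r) ^ q * (‖a n‖₊ : ℝ≥0∞) ^ q * μ (A n) := by
            gcongr
        _ = (ENNReal.ofReal M') ^ q * ((‖a n‖₊ : ℝ≥0∞) ^ q *
              ((μ (A n) ^ r) ^ q * μ (A n))) := by
            rw [ENNReal.mul_rpow_of_nonneg _ _ hq0.le]
            ring
        _ = (ENNReal.ofReal M') ^ q * ((‖a n‖₊ : ℝ≥0∞) ^ q * μ (A n) ^ (q/p)) := by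
            have hstep : (μ (A n) ^ r) ^ q * μ (A n) = μ (A n) ^ (q/p) := by
              rw [← ENNReal.rpow_mul]
              nth_rewrite 2 [show (μ (A n)) = μ (A n) ^ (1:ℝ) from (ENNReal.rpow_one _).symm]
              rw [← ENNReal.rpow_add _ _ hμ0 hμt]
              congr 1
              rw [hrdef]
              field_simp
              ring
            rw [hstep]
        _ = (ENNReal.ofReal M') ^ q * ((‖a n‖₊ : ℝ≥0∞) ^ p * μ (A n)) ^ (q/p) := by
            congr 1
            rw [ENNReal.mul_rpow_of_nonneg _ _ (by positivity : (0:ℝ) ≤ q/p),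
              ← ENNReal.rpow_mul]
            congr 2
            field_simp
    -- put it together
    have hI : ∫⁻ x, φ x ∂μ ≤ (ENNReal.ofReal M') ^ q * J ^ (q/p) := by
      calc ∫⁻ x, φ x ∂μ = ∑' n, ∫⁻ x in A n, φ x ∂μ := by
            rw [hsplit, hBzero, add_zero, hUint]
        _ = ∑' n, (‖c n * a n‖₊ : ℝ≥0∞) ^ q * μ (A n) := tsum_congr hterm
        _ ≤ ∑' n, (ENNReal.ofReal M') ^ q * ((‖a n‖₊ : ℝ≥0∞) ^ p * μ (A n)) ^ (q/p) :=
            ENNReal.tsum_le_tsum hcterm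
        _ = (ENNReal.ofReal M') ^ q * ∑' n, ((‖a n‖₊ : ℝ≥0∞) ^ p * μ (A n)) ^ (q/p) :=
            ENNReal.tsum_mul_left
        _ ≤ (ENNReal.ofReal M') ^ q * (∑' n, (‖a n‖₊ : ℝ≥0∞) ^ p * μ (A n)) ^ (q/p) := by
            gcongr
            exact tsum_rpow_le_rpow_tsum' ((one_le_div hp0).mpr hpq.le)
        _ ≤ (ENNReal.ofReal M') ^ q * J ^ (q/p) := by
            gcongr
    calc (∫⁻ x, φ x ∂μ) ^ (1/q) ≤ ((ENNReal.ofReal M') ^ q * J ^ (q/p)) ^ (1/q) := by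
          gcongr
      _ = ENNReal.ofReal M' * J ^ (1/p) := by
          rw [ENNReal.mul_rpow_of_nonneg _ _ (by positivity : (0:ℝ) ≤ 1/q),
            ← ENNReal.rpow_mul, ← ENNReal.rpow_mul]
          have e1 : q * (1/q) = 1 := by field_simp
          have e2 : q/p * (1/q) = 1/p := by
            field_simp
          rw [e1, e2, ENNReal.rpow_one]
end

section
/- Let Ω = [−1,1] with μ = (1/2)·Lebesgue measure, 𝒜 the σ-algebra generated by symmetric intervals (−a,a), and E the conditional expectation, given by E(f)(w) = (f(w)+f(−w))/2. Then |f| ≤ 2·E(|f|) a.e. for every integrable f, and consequently for any Young's function Φ, Φ(|f|) ≤ 2·E(Φ(|f|)) a.e., and the pair (E,Φ) satisfies the GCH-inequality with constant C = 4: E(|fg|) ≤ 4·Φ⁻¹(E(Φ(|f|)))·Φ*⁻¹(E(Φ*(|g|))). -/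
open MeasureTheory

/-- The measure `μ = (1/2)·(Lebesgue measure on [−1,1])`. -/
noncomputable def symMeasure : Measure ℝ :=
  (2 : ENNReal)⁻¹ • (MeasureTheory.volume.restrict (Set.Icc (-1 : ℝ) 1))

/-- The conditional expectation with respect to the σ-algebra of symmetric sets:
`E(f)(w) = (f(w) + f(−w))/2`. -/
noncomputable def symCondExp (f : ℝ → ℝ) (w : ℝ) : ℝ := (f w + f (-w)) / 2

/-- Example 2.10: on `Ω = [−1,1]` with `μ = (1/2)·Lebesgue` and `E` the
symmetrization conditional expectation, `|f| ≤ 2 E(|f|)` a.e.; consequently for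
any Young's function `Φ`, `Φ(|f|) ≤ 2 E(Φ(|f|))` a.e., and `(E, Φ)` satisfies the
GCH-inequality with constant `4`:
`E(|fg|) ≤ 4 Φ⁻¹(E(Φ(|f|))) Φ*⁻¹(E(Φ*(|g|)))` a.e.
Here `ψ` and `ψs` are the inverses of `Φ` and `Φ*` on `[0,∞)`. -/
theorem symmetric_condexp_GCH (Φ ψ ψs : ℝ → ℝ) (hΦ : IsYoung Φ)
    (hψ_nonneg : ∀ a : ℝ, 0 ≤ a → 0 ≤ ψ a)
    (hψ_right : ∀ a : ℝ, 0 ≤ a → Φ (ψ a) = a)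
    (hψ_left : ∀ x : ℝ, 0 ≤ x → ψ (Φ x) = x)
    (hψs_nonneg : ∀ a : ℝ, 0 ≤ a → 0 ≤ ψs a)
    (hψs_right : ∀ a : ℝ, 0 ≤ a → complYoung Φ (ψs a) = a)
    (hψs_left : ∀ x : ℝ, 0 ≤ x → ψs (complYoung Φ x) = x) :
    (∀ f : ℝ → ℝ, Integrable f symMeasure →
      ∀ᵐ w ∂symMeasure, |f w| ≤ 2 * symCondExp (fun x => |f x|) w) ∧
    (∀ f : ℝ → ℝ, ∀ᵐ w ∂symMeasure,
      Φ |f w| ≤ 2 * symCondExp (fun x => Φ |f x|) w) ∧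
    (∀ f g : ℝ → ℝ, ∀ᵐ w ∂symMeasure,
      symCondExp (fun x => |f x * g x|) w ≤
        4 * ψ (symCondExp (fun x => Φ |f x|) w) *
          ψs (symCondExp (fun x => complYoung Φ |g x|) w)) := by
  obtain ⟨hc, hconv, hzero, heven, htend⟩ := hΦ
  have h0 : Φ 0 = 0 := (hzero 0).mpr rfl
  -- Φ is nonnegative
  have hnn : ∀ x, 0 ≤ Φ x := by
    intro x
    have h := hconv.2 (Set.mem_univ x) (Set.mem_univ (-x))
      (by norm_num : (0:ℝ) ≤ 1/2) (by norm_num : (0:ℝ) ≤ 1/2) (by norm_num)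
    have hx : (1/2:ℝ) • x + (1/2:ℝ) • (-x) = 0 := by
      simp [smul_eq_mul]
      try ring
    rw [hx, h0, heven] at h
    simp only [smul_eq_mul] at h
    linarith
  -- Φ is monotone on [0,∞)
  have hmono : ∀ x y : ℝ, 0 ≤ x → x ≤ y → Φ x ≤ Φ y := by
    intro x y hx hxy
    rcases eq_or_lt_of_le (hx.trans hxy) with h | h
    · have hx0 : x = 0 := le_antisymm (hxy.trans h.symm.le) hx
      rw [hx0, ← h]
    · have ht0 : 0 ≤ x / y := div_nonneg hx h.le
      have ht1 : x / y ≤ 1 := div_le_one_of_le₀ hxy h.le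
      have h2 := hconv.2 (Set.mem_univ y) (Set.mem_univ 0) ht0
        (by linarith : (0:ℝ) ≤ 1 - x / y) (by ring)
      have he : (x / y) • y + (1 - x / y) • (0:ℝ) = x := by
        field_simp
        simp [smul_eq_mul, h.ne']
      rw [he, h0] at h2
      simp only [smul_eq_mul] at h2
      have := hnn y
      nlinarith
  -- Φ doubling: 2 Φ x ≤ Φ (2x)
  have hΦdbl : ∀ x : ℝ, 2 * Φ x ≤ Φ (2 * x) := by
    intro x
    have h := hconv.2 (Set.mem_univ (2*x)) (Set.mem_univ 0)
      (by norm_num : (0:ℝ) ≤ 1/2) (by norm_num : (0:ℝ) ≤ 1/2) (by norm_num)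
    have he : (1/2:ℝ) • (2*x) + (1/2:ℝ) • (0:ℝ) = x := by
      simp [smul_eq_mul]
      try ring
    rw [he, h0] at h
    simp only [smul_eq_mul] at h
    linarith
  -- the defining set of complYoung is bounded above
  have hbdd : ∀ y : ℝ, BddAbove ((fun x => x * |y| - Φ x) '' Set.Ici (0:ℝ)) := by
    intro y
    obtain ⟨M, hM⟩ := Filter.eventually_atTop.mp (htend.eventually_ge_atTop (|y| + 1))
    refine ⟨max M 1 * |y|, ?_⟩
    rintro _ ⟨x, hx, rfl⟩
    simp only at *
    by_cases hxM : x ≤ max M 1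
    · have h1 : x * |y| - Φ x ≤ x * |y| := by linarith [hnn x]
      have h2 : x * |y| ≤ max M 1 * |y| := mul_le_mul_of_nonneg_right hxM (abs_nonneg y)
      linarith
    · push_neg at hxM
      have hx1 : (1:ℝ) ≤ x := le_of_lt (lt_of_le_of_lt (le_max_right M 1) hxM)
      have hxpos : (0:ℝ) < x := by linarith
      have hM' : |y| + 1 ≤ Φ x / x := hM x (le_of_lt (lt_of_le_of_lt (le_max_left M 1) hxM))
      have h3 : (|y| + 1) * x ≤ Φ x := (le_div_iff₀ hxpos).mp hM'
      have h4 : x * |y| - Φ x ≤ -x := by nlinarith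
      have h5 : (0:ℝ) ≤ max M 1 * |y| :=
        mul_nonneg (le_trans zero_le_one (le_max_right M 1)) (abs_nonneg y)
      linarith
  have hmemset : ∀ y : ℝ, (0:ℝ) ∈ (fun x => x * |y| - Φ x) '' Set.Ici (0:ℝ) :=
    fun y => ⟨0, Set.self_mem_Ici, by simp [h0]⟩
  -- complYoung is nonnegative
  have hsnn : ∀ y : ℝ, 0 ≤ complYoung Φ y := fun y => le_csSup (hbdd y) (hmemset y)
  -- complYoung is monotone on [0,∞)
  have hsmono : ∀ a b : ℝ, 0 ≤ a → a ≤ b → complYoung Φ a ≤ complYoung Φ b := by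
    intro a b ha hab
    apply Real.sSup_le _ (hsnn b)
    rintro _ ⟨x, hx, rfl⟩
    simp only at *
    have habs : |a| ≤ |b| := by
      rw [abs_of_nonneg ha, abs_of_nonneg (ha.trans hab)]; exact hab
    have h1 : x * |a| - Φ x ≤ x * |b| - Φ x := by
      have := mul_le_mul_of_nonneg_left habs hx
      linarith
    exact h1.trans (le_csSup (hbdd b) ⟨x, hx, rfl⟩)
  -- complYoung doubling: 2 Φ*(v) ≤ Φ*(2v) for v ≥ 0
  have hsdbl : ∀ v : ℝ, 0 ≤ v → 2 * complYoung Φ v ≤ complYoung Φ (2 * v) := by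
    intro v hv
    have h : complYoung Φ v ≤ complYoung Φ (2 * v) / 2 := by
      apply Real.sSup_le
      · rintro _ ⟨x, hx, rfl⟩
        simp only at *
        have h2 : x * |2 * v| - Φ x ≤ complYoung Φ (2 * v) :=
          le_csSup (hbdd _) ⟨x, hx, rfl⟩
        rw [abs_of_nonneg (by linarith : (0:ℝ) ≤ 2 * v)] at h2
        rw [abs_of_nonneg hv]
        nlinarith [hnn x]
      · have := hsnn (2 * v); linarith
    linarith
  -- ψ monotone on [0,∞)
  have hψmono : ∀ a b : ℝ, 0 ≤ a → a ≤ b → ψ a ≤ ψ b := by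
    intro a b ha hab
    by_contra h
    push_neg at h
    have h1 := hmono (ψ b) (ψ a) (hψ_nonneg b (ha.trans hab)) h.le
    rw [hψ_right a ha, hψ_right b (ha.trans hab)] at h1
    have : a = b := le_antisymm hab h1
    rw [this] at h
    exact lt_irrefl _ h
  -- ψs monotone on [0,∞)
  have hψsmono : ∀ a b : ℝ, 0 ≤ a → a ≤ b → ψs a ≤ ψs b := by
    intro a b ha hab
    by_contra h
    push_neg at h
    have h1 := hsmono (ψs b) (ψs a) (hψs_nonneg b (ha.trans hab)) h.le
    rw [hψs_right a ha, hψs_right b (ha.trans hab)] at h1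
    have : a = b := le_antisymm hab h1
    rw [this] at h
    exact lt_irrefl _ h
  -- ψ doubling: ψ (2u) ≤ 2 ψ u for u ≥ 0
  have hψdbl : ∀ u : ℝ, 0 ≤ u → ψ (2 * u) ≤ 2 * ψ u := by
    intro u hu
    have h1 : 2 * u ≤ Φ (2 * ψ u) := by
      have := hΦdbl (ψ u)
      rw [hψ_right u hu] at this
      linarith
    have h2 := hψmono (2 * u) (Φ (2 * ψ u)) (by linarith) h1
    rwa [hψ_left (2 * ψ u) (by linarith [hψ_nonneg u hu])] at h2
  -- ψs doubling
  have hψsdbl : ∀ u : ℝ, 0 ≤ u → ψs (2 * u) ≤ 2 * ψs u := by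
    intro u hu
    have h1 : 2 * u ≤ complYoung Φ (2 * ψs u) := by
      have := hsdbl (ψs u) (hψs_nonneg u hu)
      rw [hψs_right u hu] at this
      linarith
    have h2 := hψsmono (2 * u) (complYoung Φ (2 * ψs u)) (by linarith) h1
    rwa [hψs_left (2 * ψs u) (by linarith [hψs_nonneg u hu])] at h2
  refine ⟨?_, ?_, ?_⟩
  · intro f _
    apply Filter.Eventually.of_forall
    intro w
    simp only [symCondExp]
    have := abs_nonneg (f (-w))
    linarith [abs_nonneg (f w)]
  · intro f
    apply Filter.Eventually.of_forall
    intro w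
    simp only [symCondExp]
    linarith [hnn |f w|, hnn |f (-w)|]
  · intro f g
    apply Filter.Eventually.of_forall
    intro w
    simp only [symCondExp]
    set A : ℝ := (Φ |f w| + Φ |f (-w)|) / 2 with hA
    set B : ℝ := (complYoung Φ |g w| + complYoung Φ |g (-w)|) / 2 with hB
    have hA0 : 0 ≤ A := by have := hnn |f w|; have := hnn |f (-w)|; positivity
    have hB0 : 0 ≤ B := by have := hsnn |g w|; have := hsnn |g (-w)|; positivity
    have hfw : ∀ v : ℝ, Φ |v| ≤ 2 * A → |v| ≤ 2 * ψ A := by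
      intro v hv
      have h1 : |v| = ψ (Φ |v|) := (hψ_left |v| (abs_nonneg v)).symm
      calc |v| = ψ (Φ |v|) := h1
        _ ≤ ψ (2 * A) := hψmono _ _ (hnn |v|) hv
        _ ≤ 2 * ψ A := hψdbl A hA0
    have hgw : ∀ v : ℝ, complYoung Φ |v| ≤ 2 * B → |v| ≤ 2 * ψs B := by
      intro v hv
      have h1 : |v| = ψs (complYoung Φ |v|) := (hψs_left |v| (abs_nonneg v)).symm
      calc |v| = ψs (complYoung Φ |v|) := h1
        _ ≤ ψs (2 * B) := hψsmono _ _ (hsnn |v|) hv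
        _ ≤ 2 * ψs B := hψsdbl B hB0
    have hf1 : |f w| ≤ 2 * ψ A := hfw (f w) (by rw [hA]; linarith [hnn |f (-w)|])
    have hf2 : |f (-w)| ≤ 2 * ψ A := hfw (f (-w)) (by rw [hA]; linarith [hnn |f w|])
    have hg1 : |g w| ≤ 2 * ψs B := hgw (g w) (by rw [hB]; linarith [hsnn |g (-w)|])
    have hg2 : |g (-w)| ≤ 2 * ψs B := hgw (g (-w)) (by rw [hB]; linarith [hsnn |g w|])
    have hψA : 0 ≤ ψ A := hψ_nonneg A hA0
    have hψsB : 0 ≤ ψs B := hψs_nonneg B hB0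
    have h1 : |f w * g w| ≤ 4 * ψ A * ψs B := by
      rw [abs_mul]
      calc |f w| * |g w| ≤ (2 * ψ A) * (2 * ψs B) :=
            mul_le_mul hf1 hg1 (abs_nonneg _) (by linarith)
        _ = 4 * ψ A * ψs B := by ring
    have h2 : |f (-w) * g (-w)| ≤ 4 * ψ A * ψs B := by
      rw [abs_mul]
      calc |f (-w)| * |g (-w)| ≤ (2 * ψ A) * (2 * ψs B) :=
            mul_le_mul hf2 hg2 (abs_nonneg _) (by linarith)
        _ = 4 * ψ A * ψs B := by ring
    linarith
end
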